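/- For all ξ_1,…,ξ_n ∈ ℤ, the asynchronous temporal robustness satisfies θ^c(x_ξ̄) ≥ θ^c(x) − max(|ξ_1|,…,|ξ_n|). -/

import Mathlib

open scoped Classical

noncomputable section

def shift {α : Type*} (x : ℤ → α) (κ : ℤ) : ℤ → α := fun t => x (t + κ)

def ashift {n : ℕ} (x : ℤ → Fin n → ℝ) (κ : Fin n → ℤ) : ℤ → Fin n → ℝ :=
  fun t i => x (t + κ i) i

def beta {n : ℕ} (c : (Fin n → ℝ) → ℤ → ℝ) (x : ℤ → Fin n → ℝ) : ℤ :=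
  if ∀ t : ℤ, 0 ≤ c (x t) t then 1 else -1

def absE (a : EReal) : EReal := max a (-a)

def eta {n : ℕ} (c : (Fin n → ℝ) → ℤ → ℝ) (x : ℤ → Fin n → ℝ) : EReal :=
  ((beta c x : ℝ) : EReal) * sSup ((fun τ : ℕ => ((τ : ℝ) : EReal)) ''
    {τ : ℕ | ∀ κ : ℤ, |κ| ≤ (τ : ℤ) → beta c (shift x κ) = beta c x})

def theta {n : ℕ} (c : (Fin n → ℝ) → ℤ → ℝ) (x : ℤ → Fin n → ℝ) : EReal :=
  ((beta c x : ℝ) : EReal) * sSup ((fun τ : ℕ => ((τ : ℝ) : EReal)) ''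
    {τ : ℕ | ∀ κ : Fin n → ℤ, (∀ i, |κ i| ≤ (τ : ℤ)) → beta c (ashift x κ) = beta c x})

/-! ### Auxiliary definitions and lemmas -/

def Sset {n : ℕ} (c : (Fin n → ℝ) → ℤ → ℝ) (x : ℤ → Fin n → ℝ) : Set ℕ :=
  {τ : ℕ | ∀ κ : Fin n → ℤ, (∀ i, |κ i| ≤ (τ : ℤ)) → beta c (ashift x κ) = beta c x}

lemma theta_eq {n : ℕ} (c : (Fin n → ℝ) → ℤ → ℝ) (x : ℤ → Fin n → ℝ) :
    theta c x = ((beta c x : ℝ) : EReal) *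
      sSup ((fun τ : ℕ => ((τ : ℝ) : EReal)) '' Sset c x) := rfl

lemma beta_cases {n : ℕ} (c : (Fin n → ℝ) → ℤ → ℝ) (x : ℤ → Fin n → ℝ) :
    beta c x = 1 ∨ beta c x = -1 := by
  unfold beta; split <;> simp

lemma ashift_ashift {n : ℕ} (x : ℤ → Fin n → ℝ) (ξ κ : Fin n → ℤ) :
    ashift (ashift x ξ) κ = ashift x (fun i => ξ i + κ i) := by
  funext t i
  show x (t + κ i + ξ i) i = x (t + (ξ i + κ i)) i
  congr 1; ring

lemma ashift_self {n : ℕ} (x : ℤ → Fin n → ℝ) (κ : Fin n → ℤ) (h : ∀ i, κ i = 0) :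
    ashift x κ = x := by
  funext t i
  show x (t + κ i) i = x t i
  rw [h i, add_zero]

lemma zero_mem_Sset {n : ℕ} (c : (Fin n → ℝ) → ℤ → ℝ) (x : ℤ → Fin n → ℝ) :
    0 ∈ Sset c x := by
  intro κ hκ
  rw [ashift_self x κ (fun i => by have := abs_le.mp (hκ i); omega)]

lemma transfer_mem {n : ℕ} (c : (Fin n → ℝ) → ℤ → ℝ) (x : ℤ → Fin n → ℝ)
    (ξ : Fin n → ℤ) (ξmax : ℤ) (hub : ∀ i, |ξ i| ≤ ξmax)
    {τ : ℕ} (hτ : τ ∈ Sset c x) (hle : ξmax ≤ (τ : ℤ)) :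
    beta c (ashift x ξ) = beta c x ∧
      ((τ : ℤ) - ξmax).toNat ∈ Sset c (ashift x ξ) := by
  have hbe : beta c (ashift x ξ) = beta c x := hτ ξ (fun i => (hub i).trans hle)
  refine ⟨hbe, fun κ hκ => ?_⟩
  have h : ∀ i, |ξ i + κ i| ≤ (τ : ℤ) := by
    intro i
    have h1 := abs_le.mp (hub i)
    have h2 := abs_le.mp (hκ i)
    rw [abs_le]
    omega
  rw [ashift_ashift, hτ _ h, hbe]

lemma clash {n : ℕ} (c : (Fin n → ℝ) → ℤ → ℝ) (x : ℤ → Fin n → ℝ)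
    (ξ : Fin n → ℤ) (ξmax : ℤ) (hub : ∀ i, |ξ i| ≤ ξmax)
    {τ τ' : ℕ} (hτ : τ ∈ Sset c x) (hτ' : τ' ∈ Sset c (ashift x ξ))
    (hle : ξmax ≤ (τ : ℤ) + (τ' : ℤ)) :
    beta c (ashift x ξ) = beta c x := by
  set κ : Fin n → ℤ := fun i =>
    if ξ i ≤ -(τ : ℤ) then -(τ : ℤ) else if (τ : ℤ) ≤ ξ i then (τ : ℤ) else ξ i with hκdef
  have hκ1 : ∀ i, |κ i| ≤ (τ : ℤ) := by
    intro i
    have h1 := abs_le.mp (hub i)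
    rw [abs_le]
    simp only [hκdef]
    split_ifs <;> omega
  have hκ2 : ∀ i, |κ i - ξ i| ≤ (τ' : ℤ) := by
    intro i
    have h1 := abs_le.mp (hub i)
    rw [abs_le]
    simp only [hκdef]
    split_ifs <;> omega
  have h1 : beta c (ashift x κ) = beta c x := hτ κ hκ1
  have h2 : beta c (ashift (ashift x ξ) (fun i => κ i - ξ i)) = beta c (ashift x ξ) :=
    hτ' _ hκ2
  have h3 : ashift (ashift x ξ) (fun i => κ i - ξ i) = ashift x κ := by
    rw [ashift_ashift]
    funext t i
    show x (t + (ξ i + (κ i - ξ i))) i = x (t + κ i) i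
    congr 1
    ring
  rw [h3, h1] at h2
  exact h2.symm

lemma sSup_le_sSup_add {n : ℕ} (c : (Fin n → ℝ) → ℤ → ℝ) (x : ℤ → Fin n → ℝ)
    (ξ : Fin n → ℤ) (ξmax : ℤ) (_h0 : 0 ≤ ξmax) (hub : ∀ i, |ξ i| ≤ ξmax) :
    sSup ((fun τ : ℕ => ((τ : ℝ) : EReal)) '' Sset c x) ≤
      sSup ((fun τ : ℕ => ((τ : ℝ) : EReal)) '' Sset c (ashift x ξ)) + ((ξmax : ℝ) : EReal) := by
  set B := sSup ((fun τ : ℕ => ((τ : ℝ) : EReal)) '' Sset c (ashift x ξ)) with hB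
  have h0B : (0 : EReal) ≤ B :=
    le_sSup ⟨0, zero_mem_Sset c (ashift x ξ), by norm_num⟩
  refine sSup_le ?_
  rintro a ⟨τ, hτ, rfl⟩
  by_cases hc : ξmax ≤ (τ : ℤ)
  · obtain ⟨-, hmem'⟩ := transfer_mem c x ξ ξmax hub hτ hc
    have hBle : ((((((τ : ℤ) - ξmax).toNat : ℕ) : ℝ)) : EReal) ≤ B :=
      le_sSup ⟨_, hmem', rfl⟩
    have heq : (((τ : ℕ) : ℝ) : EReal) =
        ((((((τ : ℤ) - ξmax).toNat : ℕ) : ℝ)) : EReal) + ((ξmax : ℝ) : EReal) := by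
      rw [← EReal.coe_add, EReal.coe_eq_coe_iff]
      have : (τ : ℤ) = ((((τ : ℤ) - ξmax).toNat : ℕ) : ℤ) + ξmax := by omega
      exact_mod_cast this
    exact le_of_eq_of_le heq (add_le_add_left hBle _)
  · have h1 : (((τ : ℕ) : ℝ) : EReal) ≤ ((ξmax : ℝ) : EReal) := by
      rw [EReal.coe_le_coe_iff]
      exact_mod_cast le_of_lt (lt_of_not_ge hc)
    calc (((τ : ℕ) : ℝ) : EReal) ≤ ((ξmax : ℝ) : EReal) := h1
      _ = 0 + ((ξmax : ℝ) : EReal) := (zero_add _).symm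
      _ ≤ B + ((ξmax : ℝ) : EReal) := add_le_add_left h0B _

/-- θ^c(x_ξ̄) ≥ θ^c(x) − max(|ξ_1|,…,|ξ_n|), where ξmax is the maximum of the |ξ_i|. -/
theorem stmt3 {n : ℕ} (c : (Fin n → ℝ) → ℤ → ℝ) (x : ℤ → Fin n → ℝ) (ξ : Fin n → ℤ)
    (ξmax : ℤ) (hub : ∀ i, |ξ i| ≤ ξmax) (hmem : ∃ i, |ξ i| = ξmax) :
    theta c (ashift x ξ) ≥ theta c x - ((ξmax : ℝ) : EReal) := by
  obtain ⟨i0, hi0⟩ := hmem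
  have h0 : (0 : ℤ) ≤ ξmax := hi0 ▸ abs_nonneg _
  rw [ge_iff_le,
    EReal.sub_le_iff_le_add (Or.inl (EReal.coe_ne_bot _)) (Or.inl (EReal.coe_ne_top _))]
  set A := sSup ((fun τ : ℕ => ((τ : ℝ) : EReal)) '' Sset c x) with hA
  set B := sSup ((fun τ : ℕ => ((τ : ℝ) : EReal)) '' Sset c (ashift x ξ)) with hB
  have h0A : (0 : EReal) ≤ A := le_sSup ⟨0, zero_mem_Sset c x, by norm_num⟩
  have h0B : (0 : EReal) ≤ B := le_sSup ⟨0, zero_mem_Sset c (ashift x ξ), by norm_num⟩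
  have hξE : (0 : EReal) ≤ ((ξmax : ℝ) : EReal) := by
    rw [EReal.coe_nonneg]; exact_mod_cast h0
  have hback : ashift (ashift x ξ) (fun i => -ξ i) = x := by
    rw [ashift_ashift]
    exact ashift_self x _ (fun i => by ring)
  have hub' : ∀ i, |(-ξ i)| ≤ ξmax := fun i => by rw [abs_neg]; exact hub i
  rw [theta_eq, theta_eq, ← hA, ← hB]
  rcases beta_cases c x with hb1 | hb1 <;> rcases beta_cases c (ashift x ξ) with hb2 | hb2 <;>
    rw [hb1, hb2] <;>
    simp only [Int.cast_one, Int.cast_neg, EReal.coe_one, EReal.coe_neg, one_mul, neg_one_mul]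
  · -- both betas 1 : A ≤ B + ξmax
    exact sSup_le_sSup_add c x ξ ξmax h0 hub
  · -- beta x = 1, beta x_ξ = -1 : A ≤ -B + ξmax
    have key : ∀ τ ∈ Sset c x, ∀ τ' ∈ Sset c (ashift x ξ), (τ : ℤ) + (τ' : ℤ) < ξmax := by
      intro τ hτ τ' hτ'
      by_contra hcon
      push_neg at hcon
      have h := clash c x ξ ξmax hub hτ hτ' hcon
      rw [hb1, hb2] at h
      omega
    refine sSup_le ?_
    rintro e ⟨τ, hτ, rfl⟩
    have hBle : B ≤ (((ξmax - (τ : ℤ) : ℤ) : ℝ) : EReal) := by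
      refine sSup_le ?_
      rintro e' ⟨τ', hτ', rfl⟩
      show (((τ' : ℕ) : ℝ) : EReal) ≤ _
      rw [EReal.coe_le_coe_iff]
      have := key τ hτ τ' hτ'
      exact_mod_cast (by omega : (τ' : ℤ) ≤ ξmax - (τ : ℤ))
    have hBtop : B ≠ ⊤ := ne_top_of_le_ne_top (EReal.coe_ne_top _) hBle
    have hBbot : B ≠ ⊥ := (lt_of_lt_of_le EReal.bot_lt_zero h0B).ne'
    have hBb : ((B.toReal : ℝ) : EReal) = B := EReal.coe_toReal hBtop hBbot
    show (((τ : ℕ) : ℝ) : EReal) ≤ -B + ((ξmax : ℝ) : EReal)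
    rw [← hBb, ← EReal.coe_neg, ← EReal.coe_add, EReal.coe_le_coe_iff]
    have hble : B.toReal ≤ ((ξmax - (τ : ℤ) : ℤ) : ℝ) := by
      rw [← EReal.coe_le_coe_iff, hBb]
      exact hBle
    push_cast at hble ⊢
    linarith
  · -- beta x = -1, beta x_ξ = 1 : -A ≤ B + ξmax
    have hA0 : -A ≤ 0 := by
      rw [EReal.neg_le, neg_zero]; exact h0A
    exact hA0.trans (add_nonneg h0B hξE)
  · -- both betas -1 : -A ≤ -B + ξmax
    have hBA := sSup_le_sSup_add c (ashift x ξ) (fun i => -ξ i) ξmax h0 hub'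
    rw [hback] at hBA
    by_cases hAtop : A = ⊤
    · rw [hAtop, EReal.neg_top]
      exact bot_le
    · have hAbot : A ≠ ⊥ := (lt_of_lt_of_le EReal.bot_lt_zero h0A).ne'
      have hAa : ((A.toReal : ℝ) : EReal) = A := EReal.coe_toReal hAtop hAbot
      have hBA' : B ≤ (((A.toReal + (ξmax : ℝ)) : ℝ) : EReal) := by
        rw [EReal.coe_add, hAa]
        exact hBA
      have hBtop : B ≠ ⊤ := ne_top_of_le_ne_top (EReal.coe_ne_top _) hBA'
      have hBbot : B ≠ ⊥ := (lt_of_lt_of_le EReal.bot_lt_zero h0B).ne'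
      have hBb : ((B.toReal : ℝ) : EReal) = B := EReal.coe_toReal hBtop hBbot
      rw [← hAa, ← hBb, ← EReal.coe_neg, ← EReal.coe_neg, ← EReal.coe_add,
        EReal.coe_le_coe_iff]
      have hble : B.toReal ≤ A.toReal + (ξmax : ℝ) := by
        rw [← EReal.coe_le_coe_iff, hBb]
        exact hBA'
      linarith
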